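/- Suppose a finitely generated group G acts by isometries on a metric space M with asdim M < m, and for some point x ∈ M every R-quasi-stabilizer W_R(x) = {g ∈ G : dist(x, gx) ≤ R} satisfies asdim W_R(x) ≤ n (with respect to a word metric on G). Then asdim G ≤ (m+1)(n+1) − 1. -/

import Mathlib

/-- `AsdimLEWith d n` : the space has asymptotic dimension at most `n` with respect to the
distance function `d`: for every `r > 0` there is a cover by sets of uniformly bounded
diameter such that every ball of radius `r` meets at most `n + 1` members of the cover. -/
def AsdimLEWith {X : Type*} (d : X → X → ℝ) (n : ℕ) : Prop :=
  ∀ r : ℝ, 0 < r → ∃ (𝒰 : Set (Set X)) (D : ℝ),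
    ⋃₀ 𝒰 = Set.univ ∧
    (∀ U ∈ 𝒰, ∀ a ∈ U, ∀ b ∈ U, d a b ≤ D) ∧
    ∀ x : X, {U | U ∈ 𝒰 ∧ ∃ y ∈ U, d x y ≤ r}.Finite ∧
      {U | U ∈ 𝒰 ∧ ∃ y ∈ U, d x y ≤ r}.ncard ≤ n + 1

/-- Word length of `g` with respect to a (symmetric) generating set `S`. -/
noncomputable def wordLength {G : Type*} [Group G] (S : Set G) (g : G) : ℕ :=
  sInf {n : ℕ | ∃ l : List G, l.length = n ∧ (∀ x ∈ l, x ∈ S) ∧ l.prod = g}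

/-- Left-invariant word metric associated to a generating set `S`. -/
noncomputable def wordDist {G : Type*} [Group G] (S : Set G) (f g : G) : ℝ :=
  (wordLength S (f⁻¹ * g) : ℝ)

section WL
variable {G : Type*} [Group G] (S : Set G)

lemma wl_exists (hrep : ∀ g : G, ∃ l : List G, (∀ s ∈ l, s ∈ S) ∧ l.prod = g) (g : G) :
    ∃ l : List G, l.length = wordLength S g ∧ (∀ x ∈ l, x ∈ S) ∧ l.prod = g := by
  have hne : {n : ℕ | ∃ l : List G, l.length = n ∧ (∀ x ∈ l, x ∈ S) ∧ l.prod = g}.Nonempty := by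
    obtain ⟨l, hl, hp⟩ := hrep g
    exact ⟨l.length, l, rfl, hl, hp⟩
  exact Nat.sInf_mem hne

lemma wl_le (g : G) (l : List G) (hl : ∀ x ∈ l, x ∈ S) (hp : l.prod = g) :
    wordLength S g ≤ l.length :=
  Nat.sInf_le ⟨l, rfl, hl, hp⟩

lemma wl_mul (hrep : ∀ g : G, ∃ l : List G, (∀ s ∈ l, s ∈ S) ∧ l.prod = g) (a b : G) :
    wordLength S (a * b) ≤ wordLength S a + wordLength S b := by
  obtain ⟨la, hla, hma, hpa⟩ := wl_exists S hrep a
  obtain ⟨lb, hlb, hmb, hpb⟩ := wl_exists S hrep b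
  have := wl_le S (a*b) (la ++ lb) (by intro y hy; rcases List.mem_append.1 hy with h | h
                                       exacts [hma y h, hmb y h])
    (by rw [List.prod_append, hpa, hpb])
  simpa [hla, hlb] using this

lemma wl_inv_le (hrep : ∀ g : G, ∃ l : List G, (∀ s ∈ l, s ∈ S) ∧ l.prod = g)
    (hsym : ∀ s ∈ S, s⁻¹ ∈ S) (g : G) :
    wordLength S g⁻¹ ≤ wordLength S g := by
  obtain ⟨l, hl, hm, hp⟩ := wl_exists S hrep g
  have := wl_le S g⁻¹ ((l.map fun y => y⁻¹).reverse)
    (by intro y hy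
        simp only [List.mem_reverse, List.mem_map] at hy
        obtain ⟨z, hz, rfl⟩ := hy
        exact hsym z (hm z hz))
    (by rw [← List.prod_inv_reverse, hp])
  simpa [hl] using this

lemma wl_inv (hrep : ∀ g : G, ∃ l : List G, (∀ s ∈ l, s ∈ S) ∧ l.prod = g)
    (hsym : ∀ s ∈ S, s⁻¹ ∈ S) (g : G) :
    wordLength S g⁻¹ = wordLength S g :=
  le_antisymm (wl_inv_le S hrep hsym g) (by simpa using wl_inv_le S hrep hsym g⁻¹)

lemma wd_symm (hrep : ∀ g : G, ∃ l : List G, (∀ s ∈ l, s ∈ S) ∧ l.prod = g)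
    (hsym : ∀ s ∈ S, s⁻¹ ∈ S) (a b : G) : wordDist S a b = wordDist S b a := by
  unfold wordDist
  rw [show b⁻¹ * a = (a⁻¹ * b)⁻¹ by group, wl_inv S hrep hsym]

lemma wd_triangle (hrep : ∀ g : G, ∃ l : List G, (∀ s ∈ l, s ∈ S) ∧ l.prod = g)
    (a b c : G) : wordDist S a c ≤ wordDist S a b + wordDist S b c := by
  unfold wordDist
  rw [← Nat.cast_add]
  have h : a⁻¹ * c = (a⁻¹*b) * (b⁻¹*c) := by group
  rw [h]
  exact_mod_cast wl_mul S hrep _ _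

lemma wd_left_inv (h a b : G) : wordDist S (h*a) (h*b) = wordDist S a b := by
  unfold wordDist; rw [show (h*a)⁻¹ * (h*b) = a⁻¹*b by group]

end WL

lemma exists_word {G : Type*} [Group G] (X : Finset G) (hsym : ∀ x ∈ X, x⁻¹ ∈ X)
    (hgen : Subgroup.closure (X : Set G) = ⊤) (g : G) :
    ∃ l : List G, (∀ s ∈ l, s ∈ (X : Set G)) ∧ l.prod = g := by
  have hg : g ∈ Subgroup.closure (X : Set G) := hgen ▸ Subgroup.mem_top g
  induction hg using Subgroup.closure_induction with
  | mem s hs => exact ⟨[s], by simpa using hs, by simp⟩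
  | one => exact ⟨[], by simp, by simp⟩
  | mul a b _ _ iha ihb =>
    obtain ⟨la, hma, hpa⟩ := iha
    obtain ⟨lb, hmb, hpb⟩ := ihb
    exact ⟨la ++ lb, by intro s hs; rcases List.mem_append.1 hs with h | h
                        exacts [hma s h, hmb s h],
           by rw [List.prod_append, hpa, hpb]⟩
  | inv a _ iha =>
    obtain ⟨l, hm, hp⟩ := iha
    refine ⟨(l.map fun y => y⁻¹).reverse, ?_, by rw [← List.prod_inv_reverse, hp]⟩
    intro s hs
    simp only [List.mem_reverse, List.mem_map] at hs
    obtain ⟨z, hz, rfl⟩ := hs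
    exact hsym z (hm z hz)

lemma lip_orbit {G M : Type*} [Group G] [PseudoMetricSpace M] [MulAction G M]
    (hiso : ∀ g : G, Isometry (fun y : M => g • y)) (x : M)
    (X : Finset G) (hsym : ∀ x ∈ X, x⁻¹ ∈ X)
    (hgen : Subgroup.closure (X : Set G) = ⊤) (g : G) :
    dist x (g • x) ≤ (∑ s ∈ X, dist x (s • x)) * (wordLength (X : Set G) g : ℝ) := by
  set C := ∑ s ∈ X, dist x (s • x) with hC
  have hC0 : 0 ≤ C := Finset.sum_nonneg fun s _ => dist_nonneg
  have hCs : ∀ s ∈ X, dist x (s • x) ≤ C := fun s hs =>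
    Finset.single_le_sum (f := fun t => dist x (t • x)) (fun t _ => dist_nonneg) hs
  have key : ∀ l : List G, (∀ s ∈ l, s ∈ (X : Set G)) →
      dist x (l.prod • x) ≤ C * l.length := by
    intro l
    induction l with
    | nil => simp
    | cons s t ih =>
      intro hm
      have h1 : dist x ((s * t.prod) • x) ≤ dist x (s • x) + dist (s • x) ((s * t.prod) • x) :=
        dist_triangle _ _ _
      have h2 : dist (s • x) ((s * t.prod) • x) = dist x (t.prod • x) := by
        rw [mul_smul]
        exact ((hiso s).dist_eq _ _).symm ▸ ((hiso s).dist_eq x (t.prod • x))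
      calc dist x ((s :: t).prod • x) = dist x ((s * t.prod) • x) := by rw [List.prod_cons]
        _ ≤ dist x (s • x) + dist x (t.prod • x) := by rw [← h2]; exact h1
        _ ≤ C + C * t.length := add_le_add (hCs s (hm s List.mem_cons_self)) (ih fun a ha => hm a (List.mem_cons_of_mem _ ha))
        _ = C * (s :: t).length := by simp [List.length_cons]; ring
  have hne : {n : ℕ | ∃ l : List G, l.length = n ∧ (∀ x ∈ l, x ∈ (X:Set G)) ∧ l.prod = g}.Nonempty := by
    obtain ⟨l, h1, h2⟩ := exists_word X hsym hgen g
    exact ⟨l.length, l, rfl, h1, h2⟩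
  obtain ⟨l, hl, hm, hp⟩ : ∃ l : List G, l.length = wordLength (X:Set G) g ∧ (∀ x ∈ l, x ∈ (X:Set G)) ∧ l.prod = g := Nat.sInf_mem hne
  calc dist x (g • x) = dist x (l.prod • x) := by rw [hp]
    _ ≤ C * l.length := key l hm
    _ = C * (wordLength (X : Set G) g : ℝ) := by rw [hl]

/-- Bell–Dranishnikov: if a finitely generated group `G` acts by isometries on a metric
space `M` with `asdim M < m`, and for some `x ∈ M` every `R`-quasi-stabilizer
`W_R(x) = {g : dist x (g • x) ≤ R}` has `asdim ≤ n`, then `asdim G ≤ (m+1)(n+1) - 1`. -/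
theorem asdim_le_of_isometric_action {G M : Type*} [Group G] [PseudoMetricSpace M]
    [MulAction G M] (hiso : ∀ g : G, Isometry (fun y : M => g • y))
    (X : Finset G) (hsym : ∀ x ∈ X, x⁻¹ ∈ X)
    (hgen : Subgroup.closure (X : Set G) = ⊤)
    (m n : ℕ) (hm : 0 < m)
    (hM : AsdimLEWith (fun a b : M => dist a b) (m - 1))
    (x : M)
    (hW : ∀ R : ℝ, 0 ≤ R →
      AsdimLEWith
        (fun a b : {g : G // dist x (g • x) ≤ R} => wordDist (X : Set G) (a : G) (b : G)) n) :
    AsdimLEWith (wordDist (X : Set G)) ((m + 1) * (n + 1) - 1) := by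
  classical
  have hrep : ∀ g : G, ∃ l : List G, (∀ s ∈ l, s ∈ (X : Set G)) ∧ l.prod = g :=
    exists_word X hsym hgen
  have hsymS : ∀ s ∈ (X : Set G), s⁻¹ ∈ (X : Set G) := by
    intro s hs; exact_mod_cast hsym s (by exact_mod_cast hs)
  have hdista : ∀ a b : G, dist (a • x) (b • x) = dist x ((a⁻¹*b) • x) := by
    intro a b
    have h : dist (a • x) (a • ((a⁻¹*b) • x)) = dist x ((a⁻¹*b) • x) := (hiso a).dist_eq _ _
    rw [smul_smul, mul_inv_cancel_left] at h
    exact h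
  intro r hr
  set C := ∑ s ∈ X, dist x (s • x) with hC
  have hC0 : 0 ≤ C := Finset.sum_nonneg fun s _ => dist_nonneg
  have hr1 : (0:ℝ) < C * r + 1 := by positivity
  obtain ⟨𝒰, DM, hUcov, hUbd, hUmul⟩ := hM (C*r+1) hr1
  set R := max DM 0 with hRdef
  have hR : (0:ℝ) ≤ R := le_max_right _ _
  have h2r : (0:ℝ) < 2*r := by linarith
  obtain ⟨𝒱, DV, hVcov, hVbd, hVmul⟩ := hW R hR (2*r) h2r
  let gU : Set M → G := fun U => if h : ∃ g : G, g • x ∈ U then h.choose else 1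
  have hgU : ∀ U : Set M, (∃ g : G, g • x ∈ U) → (gU U) • x ∈ U := by
    intro U h
    simp only [gU, dif_pos h]
    exact h.choose_spec
  let T : Set M → Set {g : G // dist x (g • x) ≤ R} → Set G := fun U V =>
    ((fun v : G => gU U * v) '' (Subtype.val '' V)) ∩ {g : G | g • x ∈ U}
  -- Lipschitz estimate for orbit map
  have hlip : ∀ a b : G, wordDist (X : Set G) a b ≤ r → dist (a • x) (b • x) ≤ C * r := by
    intro a b hab
    rw [hdista a b]
    calc dist x ((a⁻¹*b) • x) ≤ C * (wordLength (X : Set G) (a⁻¹*b) : ℝ) :=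
          lip_orbit hiso x X hsym hgen _
      _ ≤ C * r := mul_le_mul_of_nonneg_left hab hC0
  refine ⟨{W | ∃ U ∈ 𝒰, ∃ V ∈ 𝒱, W = T U V}, DV, ?_, ?_, ?_⟩
  · -- cover
    apply Set.eq_univ_of_forall
    intro g
    have hgx' : g • x ∈ ⋃₀ 𝒰 := hUcov ▸ Set.mem_univ _
    obtain ⟨U, hU, hgx⟩ := hgx'
    have hne : ∃ g' : G, g' • x ∈ U := ⟨g, hgx⟩
    have hb : dist x (((gU U)⁻¹ * g) • x) ≤ R := by
      rw [← hdista]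
      exact (hUbd U hU _ (hgU U hne) _ hgx).trans (le_max_left _ _)
    have hv' : (⟨(gU U)⁻¹ * g, hb⟩ : {g : G // dist x (g • x) ≤ R}) ∈ ⋃₀ 𝒱 :=
      hVcov ▸ Set.mem_univ _
    obtain ⟨V, hV, hv⟩ := hv'
    exact Set.mem_sUnion.2 ⟨T U V, ⟨U, hU, V, hV, rfl⟩,
      ⟨⟨(gU U)⁻¹*g, ⟨⟨(gU U)⁻¹*g, hb⟩, hv, rfl⟩, by group⟩, hgx⟩⟩
  · -- uniform bound
    rintro W ⟨U, hU, V, hV, rfl⟩ a ha b hb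
    obtain ⟨va, ⟨sa, hsa, rfl⟩, rfl⟩ := ha.1
    obtain ⟨vb, ⟨sb, hsb, rfl⟩, rfl⟩ := hb.1
    rw [wd_left_inv]
    exact hVbd V hV sa hsa sb hsb
  · -- multiplicity
    intro g
    set F : Set (Set M) := {U | U ∈ 𝒰 ∧ ∃ p ∈ U, dist (g • x) p ≤ C*r+1} with hF
    obtain ⟨hFfin, hFcard⟩ := hUmul (g • x)
    have hFcard' : F.ncard ≤ m := hFcard.trans (Nat.sub_add_cancel hm).le
    let z : Set M → {g : G // dist x (g • x) ≤ R} := fun U =>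
      if h : ∃ v : {g : G // dist x (g • x) ≤ R},
          wordDist (X : Set G) g (gU U * ↑v) ≤ r then h.choose
      else ⟨1, by simpa using hR⟩
    let GV : Set M → Set (Set {g : G // dist x (g • x) ≤ R}) := fun U =>
      {V | V ∈ 𝒱 ∧ ∃ w ∈ V, wordDist (X : Set G) ↑(z U) ↑w ≤ 2*r}
    have hGVfin : ∀ U, (GV U).Finite := fun U => (hVmul (z U)).1
    have hGVcard : ∀ U, (GV U).ncard ≤ n + 1 := fun U => (hVmul (z U)).2
    have hsub : {W | (∃ U ∈ 𝒰, ∃ V ∈ 𝒱, W = T U V) ∧ ∃ y ∈ W, wordDist (X : Set G) g y ≤ r}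
        ⊆ ⋃ U ∈ F, (T U) '' (GV U) := by
      rintro W ⟨⟨U, hU, V, hV, rfl⟩, y, hy, hdy⟩
      obtain ⟨hy1, hy2⟩ := hy
      obtain ⟨vy, ⟨sy, hsy, rfl⟩, heq0⟩ := hy1
      have heq : gU U * (sy : G) = y := heq0
      have hUF : U ∈ F := by
        refine ⟨hU, y • x, hy2, ?_⟩
        have := hlip g y hdy
        linarith
      have hQ : ∃ v : {g : G // dist x (g • x) ≤ R},
          wordDist (X : Set G) g (gU U * ↑v) ≤ r := ⟨sy, by rw [heq]; exact hdy⟩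
      have hz : wordDist (X : Set G) g (gU U * ↑(z U)) ≤ r := by
        simp only [z, dif_pos hQ]
        exact hQ.choose_spec
      have hVGV : V ∈ GV U := by
        refine ⟨hV, sy, hsy, ?_⟩
        have t1 : wordDist (X : Set G) ((z U : G)) ((gU U)⁻¹ * g) ≤ r := by
          rw [wd_symm _ hrep hsymS]
          have := wd_left_inv (X : Set G) (gU U) ((gU U)⁻¹ * g) (z U : G)
          rw [mul_inv_cancel_left] at this
          rw [← this]
          exact hz
        have t2 : wordDist (X : Set G) ((gU U)⁻¹ * g) ((sy : G)) ≤ r := by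
          have := wd_left_inv (X : Set G) (gU U) ((gU U)⁻¹ * g) (sy : G)
          rw [mul_inv_cancel_left] at this
          rw [← this, heq]
          exact hdy
        calc wordDist (X : Set G) ((z U : G)) ((sy : G))
            ≤ wordDist (X : Set G) ((z U : G)) ((gU U)⁻¹ * g)
              + wordDist (X : Set G) ((gU U)⁻¹ * g) ((sy : G)) := wd_triangle _ hrep _ _ _
          _ ≤ 2*r := by linarith
      exact Set.mem_biUnion hUF ⟨V, hVGV, rfl⟩
    have hbigfin : (⋃ U ∈ F, (T U) '' (GV U)).Finite :=
      hFfin.biUnion fun U _ => (hGVfin U).image _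
    constructor
    · exact hbigfin.subset hsub
    · -- cardinality
      let f : Set M → Finset (Set G) := fun U => ((hGVfin U).image (T U)).toFinset
      have hcoe : ⋃ U ∈ F, (T U) '' (GV U) = ↑(hFfin.toFinset.biUnion f) := by
        ext W
        simp only [Set.mem_iUnion, Finset.coe_biUnion, Set.mem_iUnion, Finset.mem_coe,
          Set.Finite.mem_toFinset, Set.mem_image, f]
        exact Iff.rfl
      have hcard : (⋃ U ∈ F, (T U) '' (GV U)).ncard ≤ m * (n+1) := by
        rw [hcoe, Set.ncard_coe_finset]
        have h1 : (hFfin.toFinset.biUnion f).card ≤ hFfin.toFinset.card * (n+1) := by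
          apply Finset.card_biUnion_le_card_mul
          intro U _
          have : (f U).card = ((T U) '' (GV U)).ncard := by
            rw [← Set.ncard_coe_finset]
            congr 1
            exact ((hGVfin U).image (T U)).coe_toFinset
          rw [this]
          exact le_trans (Set.ncard_image_le (hGVfin U)) (hGVcard U)
        have h2 : hFfin.toFinset.card = F.ncard := by
          rw [← Set.ncard_coe_finset]
          congr 1
          exact hFfin.coe_toFinset
        calc (hFfin.toFinset.biUnion f).card ≤ hFfin.toFinset.card * (n+1) := h1
          _ ≤ m * (n+1) := Nat.mul_le_mul_right _ (h2 ▸ hFcard')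
      have hle := Set.ncard_le_ncard hsub hbigfin
      have hfinal : m * (n+1) ≤ (m+1)*(n+1) - 1 + 1 := by
        have h3 : (m+1)*(n+1) - 1 + 1 = (m+1)*(n+1) := Nat.sub_add_cancel (Nat.one_le_iff_ne_zero.mpr (Nat.mul_ne_zero (Nat.succ_ne_zero m) (Nat.succ_ne_zero n)))
        rw [h3]
        exact Nat.mul_le_mul_right _ (Nat.le_succ m)
      exact le_trans (le_trans hle hcard) hfinal
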